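/- Let G₁ and G₂ be finite groups and p, q primes. Then q divides |(G₁ × G₂)/O_{p',p}(G₁ × G₂)| if and only if q divides |G₁/O_{p',p}(G₁)| or q divides |G₂/O_{p',p}(G₂)|. (The Hawkes graph function is D₀-closed: Γ_H(G₁×G₂) = Γ_H(G₁) ∪ Γ_H(G₂).) -/

import Mathlib

/-- The join of a set of normal subgroups is normal. -/
theorem sSup_normal {G : Type*} [Group G] (S : Set (Subgroup G)) (hS : ∀ N ∈ S, N.Normal) :
    (sSup S).Normal := by
  constructor
  intro n hn g
  rw [sSup_eq_iSup'] at hn ⊢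
  refine Subgroup.iSup_induction (C := fun x => g * x * g⁻¹ ∈ ⨆ N : S, (N : Subgroup G))
    _ hn ?_ ?_ ?_
  · intro N x hx
    exact Subgroup.mem_iSup_of_mem N ((hS N N.2).conj_mem x hx g)
  · simpa using Subgroup.one_mem _
  · intro x y hx hy
    have h : g * (x * y) * g⁻¹ = (g * x * g⁻¹) * (g * y * g⁻¹) := by group
    rw [h]; exact Subgroup.mul_mem _ hx hy

/-- The `p'`-core `O_{p'}(G)`: the largest normal subgroup of `G` of order coprime to `p`,
realized as the join of all normal subgroups of order coprime to `p`. -/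
def pPrimeCore (p : ℕ) (G : Type*) [Group G] : Subgroup G :=
  sSup {N : Subgroup G | N.Normal ∧ Nat.Coprime (Nat.card N) p}

instance pPrimeCore_normal (p : ℕ) (G : Type*) [Group G] : (pPrimeCore p G).Normal :=
  sSup_normal _ fun _ hN => hN.1

/-- The `p`-core `O_p(G)`: the largest normal `p`-subgroup of `G`,
realized as the join of all normal `p`-subgroups. -/
def pCore (p : ℕ) (G : Type*) [Group G] : Subgroup G :=
  sSup {N : Subgroup G | N.Normal ∧ IsPGroup p N}

instance pCore_normal (p : ℕ) (G : Type*) [Group G] : (pCore p G).Normal :=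
  sSup_normal _ fun _ hN => hN.1

/-- `O_{p',p}(G)`: the preimage in `G` of `O_p(G / O_{p'}(G))`. -/
def OpPrimeP (p : ℕ) (G : Type*) [Group G] : Subgroup G :=
  (pCore p (G ⧸ pPrimeCore p G)).comap (QuotientGroup.mk' (pPrimeCore p G))

/-- A Schmidt group: a non-nilpotent group all of whose proper subgroups are nilpotent. -/
def IsSchmidt (G : Type*) [Group G] : Prop :=
  ¬ Group.IsNilpotent G ∧ ∀ H : Subgroup G, H ≠ ⊤ → Group.IsNilpotent H

/-- A Schmidt `(p,q)`-group: a Schmidt group whose order is divisible by exactly the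
primes `p` and `q` and whose Sylow `p`-subgroup is normal. -/
def IsSchmidtPQ (p q : ℕ) (G : Type*) [Group G] : Prop :=
  IsSchmidt G ∧ (Nat.card G).primeFactors = {p, q} ∧ ∃ P : Sylow p G, (P : Subgroup G).Normal

section Aux

open Subgroup QuotientGroup

variable {p : ℕ}

/-- A product of `p`-groups is a `p`-group. -/
lemma isPGroup_prod {G H : Type*} [Group G] [Group H] (hG : IsPGroup p G)
    (hH : IsPGroup p H) : IsPGroup p (G × H) := by
  intro g
  obtain ⟨k₁, h1⟩ := hG g.1
  obtain ⟨k₂, h2⟩ := hH g.2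
  refine ⟨k₁ + k₂, ?_⟩
  rw [Prod.ext_iff]
  constructor
  · show g.1 ^ p ^ (k₁ + k₂) = 1
    rw [pow_add, pow_mul, h1, one_pow]
  · show g.2 ^ p ^ (k₁ + k₂) = 1
    rw [pow_add, mul_comm, pow_mul, h2, one_pow]

lemma le_pCore {G : Type*} [Group G] {N : Subgroup G} (h1 : N.Normal)
    (h2 : IsPGroup p N) : N ≤ pCore p G :=
  le_sSup ⟨h1, h2⟩

lemma le_pPrimeCore {G : Type*} [Group G] {N : Subgroup G} (h1 : N.Normal)
    (h2 : Nat.Coprime (Nat.card N) p) : N ≤ pPrimeCore p G :=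
  le_sSup ⟨h1, h2⟩

/-- The cardinality of the image of a subgroup divides the cardinality of the subgroup. -/
lemma card_map_dvd {G K : Type*} [Group G] [Group K] [Finite G] (H : Subgroup G)
    (f : G →* K) : Nat.card (H.map f) ∣ Nat.card H := by
  have hrange : (f.comp H.subtype).range = H.map f := by
    rw [MonoidHom.range_eq_map, ← Subgroup.map_map, ← MonoidHom.range_eq_map,
      Subgroup.range_subtype]
  have h1 : Nat.card (H.map f) = Nat.card (H ⧸ (f.comp H.subtype).ker) := by
    rw [← hrange]
    exact (Nat.card_congr (QuotientGroup.quotientKerEquivRange (f.comp H.subtype)).toEquiv).symm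
  rw [h1]
  exact Subgroup.card_quotient_dvd_card _

/-- The cardinality of a join with a normal subgroup divides the product of cardinalities. -/
lemma card_sup_dvd {G : Type*} [Group G] [Finite G] (N M : Subgroup G) [M.Normal] :
    Nat.card (N ⊔ M : Subgroup G) ∣ Nat.card N * Nat.card M := by
  have h1 : Nat.card (N ⊔ M : Subgroup G) =
      Nat.card ((N ⊔ M : Subgroup G) ⧸ M.subgroupOf (N ⊔ M)) *
        Nat.card (M.subgroupOf (N ⊔ M)) :=
    Subgroup.card_eq_card_quotient_mul_card_subgroup _
  have h2 : Nat.card ((N ⊔ M : Subgroup G) ⧸ M.subgroupOf (N ⊔ M)) ∣ Nat.card N := by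
    rw [← Nat.card_congr (QuotientGroup.quotientInfEquivProdNormalQuotient N M).toEquiv]
    exact Subgroup.card_quotient_dvd_card _
  have h3 : Nat.card (M.subgroupOf (N ⊔ M)) ∣ Nat.card M :=
    Subgroup.card_comap_dvd_of_injective M (N ⊔ M).subtype Subtype.coe_injective
  rw [h1]
  exact mul_dvd_mul h2 h3

lemma isPGroup_pCore (p : ℕ) (G : Type*) [Group G] [Finite G] :
    IsPGroup p (pCore p G) := by
  have key : ∀ S : Set (Subgroup G),
      (∀ N ∈ S, N.Normal ∧ IsPGroup p (↥N)) → IsPGroup p (↥(sSup S)) := by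
    intro S hS
    refine Set.Finite.induction_on
      (motive := fun (s : Set (Subgroup G)) _ => (∀ N ∈ s, N.Normal ∧ IsPGroup p (↥N)) → IsPGroup p (↥(sSup s)))
      S (Set.toFinite S) ?_ ?_ hS
    · intro _
      rw [sSup_empty]
      exact IsPGroup.of_bot
    · intro N s _ _ ih h
      rw [sSup_insert]
      haveI : (sSup s).Normal := _root_.sSup_normal s fun M hM => (h M (Set.mem_insert_of_mem _ hM)).1
      exact IsPGroup.to_sup_of_normal_right (h N (Set.mem_insert _ _)).2
        (ih fun M hM => h M (Set.mem_insert_of_mem _ hM))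
  exact key _ fun N hN => hN

lemma coprime_card_pPrimeCore (p : ℕ) (G : Type*) [Group G] [Finite G] :
    Nat.Coprime (Nat.card (pPrimeCore p G)) p := by
  have key : ∀ S : Set (Subgroup G),
      (∀ N ∈ S, N.Normal ∧ Nat.Coprime (Nat.card (↥N)) p) →
        Nat.Coprime (Nat.card (↥(sSup S))) p := by
    intro S hS
    refine Set.Finite.induction_on
      (motive := fun (s : Set (Subgroup G)) _ => (∀ N ∈ s, N.Normal ∧ Nat.Coprime (Nat.card (↥N)) p) →
        Nat.Coprime (Nat.card (↥(sSup s))) p)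
      S (Set.toFinite S) ?_ ?_ hS
    · intro _
      rw [sSup_empty]
      simp
    · intro N s _ _ ih h
      rw [sSup_insert]
      haveI : (sSup s).Normal := _root_.sSup_normal s fun M hM => (h M (Set.mem_insert_of_mem _ hM)).1
      have h2 := ih fun M hM => h M (Set.mem_insert_of_mem _ hM)
      exact Nat.Coprime.coprime_dvd_left (card_sup_dvd N (sSup s))
        (Nat.Coprime.mul (h N (Set.mem_insert _ _)).2 h2)
  exact key _ fun N hN => hN

lemma pCore_prod (p : ℕ) (G₁ G₂ : Type*) [Group G₁] [Group G₂] [Finite G₁] [Finite G₂] :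
    pCore p (G₁ × G₂) = (pCore p G₁).prod (pCore p G₂) := by
  apply le_antisymm
  · apply sSup_le
    rintro N ⟨hN, hNp⟩ x hx
    rw [Subgroup.mem_prod]
    exact ⟨le_pCore (hN.map (MonoidHom.fst G₁ G₂) Prod.fst_surjective) (hNp.map _) ⟨x, hx, rfl⟩,
      le_pCore (hN.map (MonoidHom.snd G₁ G₂) Prod.snd_surjective) (hNp.map _) ⟨x, hx, rfl⟩⟩
  · exact le_pCore (Subgroup.prod_normal _ _)
      ((isPGroup_prod (isPGroup_pCore p G₁) (isPGroup_pCore p G₂)).of_equiv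
        (Subgroup.prodEquiv _ _).symm)

lemma pPrimeCore_prod (p : ℕ) (G₁ G₂ : Type*) [Group G₁] [Group G₂] [Finite G₁] [Finite G₂] :
    pPrimeCore p (G₁ × G₂) = (pPrimeCore p G₁).prod (pPrimeCore p G₂) := by
  apply le_antisymm
  · apply sSup_le
    rintro N ⟨hN, hNc⟩ x hx
    rw [Subgroup.mem_prod]
    exact ⟨le_pPrimeCore (hN.map (MonoidHom.fst G₁ G₂) Prod.fst_surjective)
        (hNc.coprime_dvd_left (_root_.card_map_dvd N _)) ⟨x, hx, rfl⟩,
      le_pPrimeCore (hN.map (MonoidHom.snd G₁ G₂) Prod.snd_surjective)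
        (hNc.coprime_dvd_left (_root_.card_map_dvd N _)) ⟨x, hx, rfl⟩⟩
  · refine le_pPrimeCore (Subgroup.prod_normal _ _) ?_
    have h : Nat.card ((pPrimeCore p G₁).prod (pPrimeCore p G₂)) =
        Nat.card (pPrimeCore p G₁) * Nat.card (pPrimeCore p G₂) := by
      rw [Nat.card_congr (Subgroup.prodEquiv _ _).toEquiv, Nat.card_prod]
    rw [h]
    exact Nat.Coprime.mul (coprime_card_pPrimeCore p G₁) (coprime_card_pPrimeCore p G₂)

/-- `pCore` is preserved by isomorphisms. -/
lemma pCore_map_equiv {G H : Type*} [Group G] [Group H] [Finite G] [Finite H]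
    (e : G ≃* H) : (pCore p G).map e.toMonoidHom = pCore p H := by
  apply le_antisymm
  · exact le_pCore ((pCore_normal p G).map e.toMonoidHom e.surjective)
      ((isPGroup_pCore p G).map _)
  · intro x hx
    have h : (pCore p H).map e.symm.toMonoidHom ≤ pCore p G :=
      le_pCore ((pCore_normal p H).map e.symm.toMonoidHom e.symm.surjective)
        ((isPGroup_pCore p H).map _)
    refine ⟨e.symm x, h ⟨x, hx, rfl⟩, ?_⟩
    simp

lemma mem_pCore_equiv {G H : Type*} [Group G] [Group H] [Finite G] [Finite H]
    (e : G ≃* H) (x : G) : x ∈ pCore p G ↔ e x ∈ pCore p H := by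
  rw [← pCore_map_equiv (p := p) e, Subgroup.mem_map_equiv]
  simp

variable {G₁ G₂ : Type*} [Group G₁] [Group G₂]

lemma ker_prodMap_mk' (A : Subgroup G₁) (B : Subgroup G₂) [A.Normal] [B.Normal] :
    ((QuotientGroup.mk' A).prodMap (QuotientGroup.mk' B)).ker = A.prod B := by
  rw [MonoidHom.ker_prodMap, QuotientGroup.ker_mk', QuotientGroup.ker_mk']

/-- The isomorphism `(G₁ × G₂)/(A × B) ≃ (G₁/A) × (G₂/B)`. -/
noncomputable def quotProdEquiv (A : Subgroup G₁) (B : Subgroup G₂) [A.Normal] [B.Normal] :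
    ((G₁ × G₂) ⧸ A.prod B) ≃* (G₁ ⧸ A) × (G₂ ⧸ B) :=
  (QuotientGroup.quotientMulEquivOfEq (ker_prodMap_mk' A B).symm).trans
    (QuotientGroup.quotientKerEquivOfSurjective
      ((QuotientGroup.mk' A).prodMap (QuotientGroup.mk' B))
      (Function.Surjective.prodMap (QuotientGroup.mk'_surjective A)
        (QuotientGroup.mk'_surjective B)))

lemma quotProdEquiv_mk (A : Subgroup G₁) (B : Subgroup G₂) [A.Normal] [B.Normal] (x : G₁ × G₂) :
    quotProdEquiv A B (QuotientGroup.mk x) =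
      ((QuotientGroup.mk x.1 : G₁ ⧸ A), (QuotientGroup.mk x.2 : G₂ ⧸ B)) := by
  rfl

lemma card_quot_prod (A : Subgroup G₁) (B : Subgroup G₂) [A.Normal] [B.Normal] :
    Nat.card ((G₁ × G₂) ⧸ A.prod B) = Nat.card (G₁ ⧸ A) * Nat.card (G₂ ⧸ B) := by
  rw [Nat.card_congr (quotProdEquiv A B).toEquiv, Nat.card_prod]

lemma OpPrimeP_prod (p : ℕ) [Finite G₁] [Finite G₂] :
    OpPrimeP p (G₁ × G₂) = (OpPrimeP p G₁).prod (OpPrimeP p G₂) := by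
  ext x
  show (↑x : (G₁ × G₂) ⧸ pPrimeCore p (G₁ × G₂)) ∈ pCore p _ ↔ _
  set e := (QuotientGroup.quotientMulEquivOfEq (pPrimeCore_prod p G₁ G₂)).trans
    (quotProdEquiv (pPrimeCore p G₁) (pPrimeCore p G₂)) with he
  have hex : e ((x : (G₁ × G₂) ⧸ pPrimeCore p (G₁ × G₂))) =
      ((x.1 : G₁ ⧸ pPrimeCore p G₁), (x.2 : G₂ ⧸ pPrimeCore p G₂)) := by
    rw [he]
    rw [MulEquiv.trans_apply, QuotientGroup.quotientMulEquivOfEq_mk, quotProdEquiv_mk]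
  rw [mem_pCore_equiv e, hex,
    pCore_prod p (G₁ ⧸ pPrimeCore p G₁) (G₂ ⧸ pPrimeCore p G₂), Subgroup.mem_prod]
  rfl

instance OpPrimeP_normal (p : ℕ) (G : Type*) [Group G] : (OpPrimeP p G).Normal :=
  (pCore_normal p _).comap _

end Aux

/-- The Hawkes graph function is `D₀`-closed: `q` divides
`|(G₁ × G₂) / O_{p',p}(G₁ × G₂)|` iff `q` divides `|G₁ / O_{p',p}(G₁)|` or
`|G₂ / O_{p',p}(G₂)|`. -/
theorem hawkes_D0_closed {G₁ G₂ : Type*} [Group G₁] [Group G₂] [Finite G₁] [Finite G₂]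
    {p q : ℕ} (hp : p.Prime) (hq : q.Prime) :
    q ∣ Nat.card ((G₁ × G₂) ⧸ OpPrimeP p (G₁ × G₂)) ↔
      q ∣ Nat.card (G₁ ⧸ OpPrimeP p G₁) ∨ q ∣ Nat.card (G₂ ⧸ OpPrimeP p G₂) := by
  rw [OpPrimeP_prod p, card_quot_prod, Nat.Prime.dvd_mul hq]
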